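/- Let a ∈ L(H) be a projection of finite rank r ≥ 1, and let M(r) denote the set of all projections in L(H) of rank r, with the operator-norm topology. Then the antipodal set O_a := {b ∈ M(r) : aba is not invertible in the unital algebra aL(H)a with unit a} has empty interior in M(r); that is, for every b ∈ M(r) and every ε > 0 there exists c ∈ M(r) with ‖c − b‖ < ε and an operator y ∈ L(H) with y = aya and (aca)y = y(aca) = a. -/

import Mathlib

variable {H : Type*} [NormedAddCommGroup H] [InnerProductSpace ℂ H] [CompleteSpace H]

open ContinuousLinearMap

lemma myclm_comp {X : Type*} [TopologicalSpace X] {A B C : Type*}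
    [NormedAddCommGroup A] [NormedAddCommGroup B] [NormedAddCommGroup C]
    [NormedSpace ℂ A] [NormedSpace ℂ B] [NormedSpace ℂ C]
    {g : X → B →L[ℂ] C} {f : X → A →L[ℂ] B} {x : X}
    (hg : ContinuousAt g x) (hf : ContinuousAt f x) :
    ContinuousAt (fun y => (g y).comp (f y)) x :=
  hg.clm_comp hf

open ContinuousLinearMap in
lemma projection_factor {H : Type*} [NormedAddCommGroup H] [InnerProductSpace ℂ H] [CompleteSpace H]
    (p : H →L[ℂ] H) (hp : IsSelfAdjoint p) (hid : p * p = p) (r : ℕ) (hr : 1 ≤ r)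
    (hrank : Module.finrank ℂ (LinearMap.range (p : H →ₗ[ℂ] H)) = r) :
    ∃ J : EuclideanSpace ℂ (Fin r) →L[ℂ] H,
      (adjoint J) ∘L J = 1 ∧ J ∘L (adjoint J) = p := by
  set K := LinearMap.range (p : H →ₗ[ℂ] H) with hK
  haveI : FiniteDimensional ℂ K := .of_finrank_pos (by rw [hrank]; omega)
  have hfix : ∀ k : K, p (k : H) = (k : H) := by
    rintro ⟨-, w, rfl⟩
    simpa using DFunLike.congr_fun hid w
  have hpadj : ∀ z w : H, (inner ℂ (p z) w : ℂ) = inner ℂ z (p w) := by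
    intro z w
    conv_lhs => rw [← hp.adjoint_eq]
    exact ContinuousLinearMap.adjoint_inner_left p w z
  set e : OrthonormalBasis (Fin r) ℂ K := (stdOrthonormalBasis ℂ K).reindex (finCongr hrank)
  set J : EuclideanSpace ℂ (Fin r) →L[ℂ] H :=
    K.subtypeL ∘L e.repr.symm.toLinearIsometry.toContinuousLinearMap with hJ
  have hmem : ∀ x, p x ∈ K := fun x => LinearMap.mem_range_self _ x
  set P : H →L[ℂ] K := p.codRestrict K hmem with hP
  set Q : H →L[ℂ] EuclideanSpace ℂ (Fin r) :=
    e.repr.toLinearIsometry.toContinuousLinearMap ∘L P with hQ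
  have hQJ : Q = adjoint J := by
    rw [ContinuousLinearMap.eq_adjoint_iff]
    intro x y
    have h1 : (inner ℂ (e.repr (P x)) y : ℂ) = inner ℂ (P x) (e.repr.symm y) := by
      conv_lhs => rw [← e.repr.apply_symm_apply y]
      exact e.repr.inner_map_map _ _
    simp only [hQ, hJ, ContinuousLinearMap.coe_comp', Function.comp_apply,
      LinearIsometry.coe_toContinuousLinearMap, LinearIsometryEquiv.coe_toLinearIsometry,
      Submodule.coe_subtypeL', Submodule.coe_subtype]
    rw [h1, Submodule.coe_inner, hP, ContinuousLinearMap.coe_codRestrict_apply, hpadj, hfix]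
  refine ⟨J, ?_, ?_⟩
  · rw [← hQJ]
    ext y
    have h2 : P ((e.repr.symm y : K) : H) = e.repr.symm y := by
      apply Subtype.ext
      rw [hP, ContinuousLinearMap.coe_codRestrict_apply]
      exact hfix _
    simp only [hQ, hJ, ContinuousLinearMap.coe_comp', Function.comp_apply,
      LinearIsometry.coe_toContinuousLinearMap, LinearIsometryEquiv.coe_toLinearIsometry,
      Submodule.coe_subtypeL', Submodule.coe_subtype, ContinuousLinearMap.one_apply]
    rw [h2, LinearIsometryEquiv.apply_symm_apply]
  · rw [← hQJ]
    ext x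
    simp only [hQ, hJ, ContinuousLinearMap.coe_comp', Function.comp_apply,
      LinearIsometry.coe_toContinuousLinearMap, LinearIsometryEquiv.coe_toLinearIsometry,
      Submodule.coe_subtypeL', Submodule.coe_subtype, LinearIsometryEquiv.symm_apply_apply]
    rw [hP, ContinuousLinearMap.coe_codRestrict_apply]


set_option maxHeartbeats 4000000 in
/-- Let `a ∈ L(H)` be a projection of finite rank `r ≥ 1`.  The
antipodal set `O_a := {b ∈ M(r) : aba not invertible in aL(H)a}` has empty interior in
the manifold `M(r)` of rank-`r` projections: for every rank-`r` projection `b` and every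
`ε > 0` there is a rank-`r` projection `c` with `‖c - b‖ < ε` such that `aca` is
invertible in the unital algebra `aL(H)a` with unit `a`. -/
theorem antipodal_set_empty_interior (a : H →L[ℂ] H) (r : ℕ) (hr : 1 ≤ r)
    (hasa : IsSelfAdjoint a) (haidem : a * a = a)
    (harank : Module.finrank ℂ (LinearMap.range (a : H →ₗ[ℂ] H)) = r) :
    ∀ b : H →L[ℂ] H, IsSelfAdjoint b → b * b = b →
      Module.finrank ℂ (LinearMap.range (b : H →ₗ[ℂ] H)) = r →
      ∀ ε : ℝ, 0 < ε →
        ∃ c : H →L[ℂ] H, IsSelfAdjoint c ∧ c * c = c ∧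
          Module.finrank ℂ (LinearMap.range (c : H →ₗ[ℂ] H)) = r ∧ ‖c - b‖ < ε ∧
          ∃ y : H →L[ℂ] H, y = a * y * a ∧ (a * c * a) * y = a ∧ y * (a * c * a) = a := by
  intro b hbsa hbidem hbrank ε hε
  obtain ⟨F, hFF, hFa⟩ := projection_factor a hasa haidem r hr harank
  obtain ⟨B, hBB, hBb⟩ := projection_factor b hbsa hbidem r hr hbrank
  set E := EuclideanSpace ℂ (Fin r) with hE
  set V : ℝ → (E →L[ℂ] H) := fun t => B + (t : ℂ) • F with hV
  have hadj : ∀ t : ℝ, adjoint (V t) = adjoint B + (t : ℂ) • adjoint F := by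
    intro t
    rw [hV]
    simp only [map_add, LinearIsometryEquiv.map_smulₛₗ]
    norm_num [Complex.conj_ofReal]
  set G : ℝ → (E →L[ℂ] E) := fun t => (adjoint (V t)) ∘L (V t) with hG
  -- continuity of the family
  have hVcont : Continuous V :=
    continuous_const.add ((Complex.continuous_ofReal).smul continuous_const)
  have hAdjCont : Continuous fun t => adjoint (V t) :=
    (ContinuousLinearMap.adjoint.continuous).comp hVcont
  have hGcont : Continuous G := hAdjCont.clm_comp hVcont
  have hV0 : V 0 = B := by simp [hV]
  have hG0 : G 0 = 1 := by rw [hG]; simp only [hV0]; exact hBB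
  set cfun : ℝ → (H →L[ℂ] H) :=
    fun t => (V t) ∘L ((Ring.inverse (G t)) ∘L (adjoint (V t))) with hcfun
  have hinnerC : ContinuousAt (fun t => (Ring.inverse (G t)) ∘L (adjoint (V t))) 0 := by
    apply myclm_comp
    · have h1 : ContinuousAt Ring.inverse (G 0) := by
        rw [hG0]
        simpa using NormedRing.inverse_continuousAt (1 : (E →L[ℂ] E)ˣ)
      exact h1.comp hGcont.continuousAt
    · exact hAdjCont.continuousAt
  have hccont : ContinuousAt cfun 0 := myclm_comp hVcont.continuousAt hinnerC
  have hc0 : cfun 0 = b := by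
    rw [hcfun]
    show (V 0).comp ((Ring.inverse (G 0)).comp (adjoint (V 0))) = _
    rw [show Ring.inverse (G 0) = 1 by rw [hG0]; exact Ring.inverse_one _]
    simp only [hV0, ContinuousLinearMap.one_def, ContinuousLinearMap.id_comp]
    exact hBb
  obtain ⟨δ, hδpos, hδ⟩ := Metric.continuousAt_iff.mp hccont ε hε
  -- choosing t
  set W : E →L[ℂ] E := (adjoint B) ∘L F + (adjoint F) ∘L B with hW
  set M : E →L[ℂ] E := (adjoint B) ∘L F with hM
  set Sbad : Set ℝ := {t : ℝ | Module.End.HasEigenvalue (M : E →ₗ[ℂ] E) (-(t : ℂ))} with hSbad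
  have hSfin : Sbad.Finite := by
    have h1 : Set.Finite {μ : ℂ | Module.End.HasEigenvalue (M : E →ₗ[ℂ] E) μ} :=
      Module.End.finite_hasEigenvalue (M : E →ₗ[ℂ] E)
    have h2 : Sbad
        = (fun t : ℝ => -(t : ℂ)) ⁻¹' {μ : ℂ | Module.End.HasEigenvalue (M : E →ₗ[ℂ] E) μ} :=
      rfl
    rw [h2]
    apply Set.Finite.preimage _ h1
    intro s _ u _ h
    have := neg_injective h
    exact_mod_cast this
  set m : ℝ := min δ (1 / (‖W‖ + 2)) with hm
  have hmpos : 0 < m := lt_min hδpos (by positivity)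
  obtain ⟨t, htIoo, htS⟩ := ((Set.Ioo_infinite hmpos).diff hSfin).nonempty
  obtain ⟨ht0, htm⟩ := htIoo
  have htδ : t < δ := lt_of_lt_of_le htm (min_le_left _ _)
  have htW : t * (‖W‖ + 2) < 1 := by
    have h := lt_of_lt_of_le htm (min_le_right _ _)
    rw [lt_div_iff₀ (by positivity)] at h
    linarith
  -- `G t` is a unit
  have hGt : G t = 1 + ((t:ℂ) • W + ((t:ℂ) * (t:ℂ)) • (1 : E →L[ℂ] E)) := by
    rw [hG]
    simp only [hadj]
    simp only [hV, hW]
    rw [ContinuousLinearMap.add_comp, ContinuousLinearMap.comp_add,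
      ContinuousLinearMap.comp_add, ContinuousLinearMap.smul_comp,
      ContinuousLinearMap.comp_smul, ContinuousLinearMap.comp_smul,
      ContinuousLinearMap.smul_comp, hBB, hFF, smul_smul]
    module
  have hunit : IsUnit (G t) := by
    set z : E →L[ℂ] E := (t:ℂ) • W + ((t:ℂ) * (t:ℂ)) • (1 : E →L[ℂ] E) with hz
    have hnz : ‖z‖ < 1 := by
      have e1 : ‖(t:ℂ) • W‖ ≤ t * ‖W‖ := by
        refine le_trans (ContinuousLinearMap.opNorm_smul_le _ _) ?_
        rw [Complex.norm_real, Real.norm_eq_abs, abs_of_pos ht0]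
      have e2 : ‖((t:ℂ) * (t:ℂ)) • (1 : E →L[ℂ] E)‖ ≤ t * t := by
        refine le_trans (ContinuousLinearMap.opNorm_smul_le _ _) ?_
        rw [norm_mul, Complex.norm_real, Real.norm_eq_abs, abs_of_pos ht0]
        have h1 : ‖(1 : E →L[ℂ] E)‖ ≤ 1 := ContinuousLinearMap.norm_id_le
        nlinarith
      have h1 : ‖z‖ ≤ t * ‖W‖ + t * t := le_trans (norm_add_le _ _) (by linarith)
      nlinarith [norm_nonneg W]
    have hu : IsUnit ((1 : E →L[ℂ] E) - -z) := ⟨Units.oneSub (-z) (by rwa [norm_neg]), rfl⟩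
    rw [sub_neg_eq_add] at hu
    rw [hGt]
    exact hu
  -- the perturbed projection
  set Gi : E →L[ℂ] E := Ring.inverse (G t) with hGi
  have hGGi : ∀ w : E, (G t) (Gi w) = w := by
    intro w
    have h1 := DFunLike.congr_fun (Ring.mul_inverse_cancel (G t) hunit) w
    simpa [ContinuousLinearMap.mul_apply] using h1
  have hGiG : ∀ w : E, Gi ((G t) w) = w := by
    intro w
    have h1 := DFunLike.congr_fun (Ring.inverse_mul_cancel (G t) hunit) w
    simpa [ContinuousLinearMap.mul_apply] using h1
  set c : H →L[ℂ] H := cfun t with hcdef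
  have hcapp : ∀ x : H, c x = (V t) (Gi (adjoint (V t) x)) := fun x => rfl
  have hGapp : ∀ w : E, (G t) w = adjoint (V t) ((V t) w) := fun w => rfl
  -- self-adjointness
  have hGadj : adjoint (G t) = G t := by
    rw [hG]
    rw [ContinuousLinearMap.adjoint_comp, ContinuousLinearMap.adjoint_adjoint]
  have hGiadj : adjoint Gi = Gi := by
    rw [← ContinuousLinearMap.star_eq_adjoint, hGi, ← Ring.inverse_star]
    rw [ContinuousLinearMap.star_eq_adjoint, hGadj]
  have hcsa : IsSelfAdjoint c := by
    rw [ContinuousLinearMap.isSelfAdjoint_iff', hcdef]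
    show adjoint ((V t).comp (Gi.comp (adjoint (V t)))) = _
    rw [ContinuousLinearMap.adjoint_comp, ContinuousLinearMap.adjoint_comp,
      ContinuousLinearMap.adjoint_adjoint, hGiadj, ContinuousLinearMap.comp_assoc]
  have hcidem : c * c = c := by
    ext x
    rw [ContinuousLinearMap.mul_apply]
    simp only [hcapp]
    rw [← hGapp, hGGi]
  -- rank of c
  have hVinj : Function.Injective (V t) := by
    intro ξ η h
    have h1 : Gi ((G t) ξ) = Gi ((G t) η) := by rw [hGapp, hGapp, h]
    rwa [hGiG, hGiG] at h1
  have hrange : LinearMap.range (c : H →ₗ[ℂ] H) = LinearMap.range ((V t) : E →ₗ[ℂ] H) := by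
    apply le_antisymm
    · rintro x ⟨w, rfl⟩
      exact ⟨Gi (adjoint (V t) w), (hcapp w).symm⟩
    · rintro x ⟨ξ, rfl⟩
      refine ⟨(V t) ξ, ?_⟩
      show c ((V t) ξ) = (V t) ξ
      rw [hcapp, ← hGapp, hGiG]
  have hcrank : Module.finrank ℂ (LinearMap.range (c : H →ₗ[ℂ] H)) = r := by
    rw [hrange]
    have h1 : Function.Injective ((V t) : E →ₗ[ℂ] H) := hVinj
    rw [show (LinearMap.range ((V t) : E →ₗ[ℂ] H) : Submodule ℂ H) = LinearMap.range ((V t) : E →ₗ[ℂ] H) from rfl,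
      LinearMap.finrank_range_of_inj h1]
    exact finrank_euclideanSpace_fin
  -- norm estimate
  have hcnorm : ‖c - b‖ < ε := by
    have h1 := hδ (show dist t 0 < δ by rwa [Real.dist_eq, sub_zero, abs_of_pos ht0])
    rwa [hc0, dist_eq_norm] at h1
  -- kernel of c avoids range of a
  have haF : ∀ x : H, F (adjoint F x) = a x := fun x => DFunLike.congr_fun hFa x
  have hker : ∀ x : H, x ∈ LinearMap.range (a : H →ₗ[ℂ] H) → c x = 0 → x = 0 := by
    intro x hx hcx
    have hax : a x = x := by
      obtain ⟨w, rfl⟩ := hx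
      have := DFunLike.congr_fun haidem w
      simpa [ContinuousLinearMap.mul_apply] using this
    have hVs : adjoint (V t) x = 0 := by
      have h1 : adjoint (V t) (c x) = adjoint (V t) x := by
        rw [hcapp, ← hGapp]
        exact hGGi _
      rw [hcx, map_zero] at h1
      exact h1.symm
    set ξ : E := adjoint F x with hξ
    have hxF : F ξ = x := by rw [hξ, haF, hax]
    have h2 : adjoint B x + (t:ℂ) • ξ = 0 := by
      have h3 := DFunLike.congr_fun (hadj t) x
      rw [hVs] at h3
      simpa [hξ] using h3.symm
    have h3 : M ξ + (t:ℂ) • ξ = 0 := by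
      rw [hM]
      have : ((adjoint B) ∘L F) ξ = adjoint B x := by
        rw [ContinuousLinearMap.comp_apply, hxF]
      rw [this]
      exact h2
    have hξ0 : ξ = 0 := by
      by_contra hne
      apply htS
      have hmem : ξ ∈ Module.End.eigenspace (M : E →ₗ[ℂ] E) (-(t:ℂ)) := by
        rw [Module.End.mem_eigenspace_iff]
        show M ξ = _
        rw [eq_neg_of_add_eq_zero_left h3, neg_smul]
      exact Module.End.hasEigenvalue_of_hasEigenvector ⟨hmem, hne⟩
    rw [← hxF, hξ0, map_zero]
  -- construction of the local inverse y
  refine ⟨c, hcsa, hcidem, hcrank, hcnorm, ?_⟩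
  set K : Submodule ℂ H := LinearMap.range (a : H →ₗ[ℂ] H) with hK
  haveI : FiniteDimensional ℂ K := .of_finrank_pos (by rw [harank]; omega)
  have hfixa : ∀ k : K, a (k : H) = (k : H) := by
    rintro ⟨-, w, rfl⟩
    simpa using DFunLike.congr_fun haidem w
  have hmem : ∀ x, a x ∈ K := fun x => LinearMap.mem_range_self _ x
  set q : H →L[ℂ] K := a.codRestrict K hmem with hq
  set lift : K →L[ℂ] H := K.subtypeL with hlift
  have hqa : ∀ x : H, q (a x) = q x := by
    intro x
    apply Subtype.ext
    rw [hq, ContinuousLinearMap.coe_codRestrict_apply, ContinuousLinearMap.coe_codRestrict_apply]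
    have := DFunLike.congr_fun haidem x
    simpa [ContinuousLinearMap.mul_apply] using this
  have hqi : ∀ k : K, q (lift k) = k := by
    intro k
    apply Subtype.ext
    rw [hq, ContinuousLinearMap.coe_codRestrict_apply]
    exact hfixa k
  have hiq : ∀ x : H, lift (q x) = a x := fun x => rfl
  have halift : ∀ k : K, a (lift k) = lift k := fun k => hfixa k
  set S : K →L[ℂ] K := (q ∘L c) ∘L lift with hS
  have haadj : ∀ z w : H, (inner ℂ (a z) w : ℂ) = inner ℂ z (a w) := by
    intro z w
    conv_lhs => rw [← hasa.adjoint_eq]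
    exact ContinuousLinearMap.adjoint_inner_left a w z
  have hcadj : ∀ z w : H, (inner ℂ (c z) w : ℂ) = inner ℂ z (c w) := by
    intro z w
    conv_lhs => rw [← hcsa.adjoint_eq]
    exact ContinuousLinearMap.adjoint_inner_left c w z
  have hSinj : Function.Injective S := by
    rw [injective_iff_map_eq_zero]
    intro k hk
    have h1 : a (c (k : H)) = 0 := by
      have := congrArg (fun z : K => (z : H)) hk
      exact (by simpa [hS, hq, ContinuousLinearMap.coe_codRestrict_apply] using this : a (c (lift k)) = 0)
    have h2 : (inner ℂ (c (k : H)) (c (k : H)) : ℂ) = 0 := by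
      have e1 : (inner ℂ (a (c (k : H))) (k : H) : ℂ) = 0 := by rw [h1, inner_zero_left]
      rw [haadj, hfixa] at e1
      calc (inner ℂ (c (k : H)) (c (k : H)) : ℂ)
          = inner ℂ (c (c (k : H))) ((k : H)) := (hcadj _ _).symm
        _ = inner ℂ (c (k : H)) ((k : H)) := by
            congr 1
            have := DFunLike.congr_fun hcidem (k : H)
            simpa [ContinuousLinearMap.mul_apply] using this
        _ = 0 := e1
    have h3 : c (k : H) = 0 := by rwa [inner_self_eq_zero] at h2
    have h4 : (k : H) = 0 := hker _ k.2 h3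
    exact Subtype.ext h4
  have hSbij : Function.Bijective (S : K →ₗ[ℂ] K) :=
    ⟨hSinj, (LinearMap.injective_iff_surjective).mp hSinj⟩
  set Se : K ≃ₗ[ℂ] K := LinearEquiv.ofBijective (S : K →ₗ[ℂ] K) hSbij with hSe
  set Sc : K ≃L[ℂ] K := Se.toContinuousLinearEquiv with hSc
  set Si : K →L[ℂ] K := (Sc.symm : K →L[ℂ] K) with hSi
  have hSiS : ∀ k : K, Si (S k) = k := by
    intro k
    have : Sc k = S k := rfl
    rw [hSi, ← this]
    exact Sc.symm_apply_apply k
  have hSSi : ∀ k : K, S (Si k) = k := by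
    intro k
    have : Sc (Si k) = S (Si k) := rfl
    rw [← this, hSi]
    exact Sc.apply_symm_apply k
  refine ⟨(lift ∘L Si) ∘L q, ?_, ?_, ?_⟩
  · ext x
    show lift (Si (q x)) = a (lift (Si (q (a x))))
    rw [hqa, halift]
  · ext x
    show a (c (a (lift (Si (q x))))) = a x
    rw [halift, show a (c (lift (Si (q x)))) = lift (q (c (lift (Si (q x))))) from rfl,
      show q (c (lift (Si (q x)))) = S (Si (q x)) from rfl, hSSi]
    exact hiq x
  · ext x
    show lift (Si (q (a (c (a x))))) = a x
    rw [hqa, show a x = lift (q x) from rfl,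
      show q (c (lift (q x))) = S (q x) from rfl, hSiS]
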